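/- arXiv:2006.01497 — 2 statements merged into one kernel-verified Lean document; each statement's English description precedes it below -/
import Mathlib

section
/- Let β, γ > 0, r₀ = β/γ, and let S, I be differentiable functions with S > 0 everywhere, satisfying S' = -βSI and I' = βSI - γI. For any t₁, t₂ with I(t₂) + S(t₂) ≠ I(t₁) + S(t₁), one has r₀ = log(S(t₂)/S(t₁)) / (I(t₂) + S(t₂) - I(t₁) - S(t₁)). -/
theorem stmt4 (β γ r₀ : ℝ) (hβ : 0 < β) (hγ : 0 < γ) (hr : r₀ = β / γ)
    (S I : ℝ → ℝ) (hSpos : ∀ t, 0 < S t)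
    (hS : ∀ t, HasDerivAt S (-β * S t * I t) t)
    (hI : ∀ t, HasDerivAt I (β * S t * I t - γ * I t) t)
    (t₁ t₂ : ℝ) (hne : I t₂ + S t₂ ≠ I t₁ + S t₁) :
    r₀ = Real.log (S t₂ / S t₁) / (I t₂ + S t₂ - I t₁ - S t₁) := by
  set F : ℝ → ℝ := fun t => I t + S t - (γ/β) * Real.log (S t) with hF
  have hF' : ∀ t, HasDerivAt F 0 t := by
    intro t
    have hlog : HasDerivAt (fun t => Real.log (S t)) ((-β * S t * I t) / S t) t :=
      (hS t).log (hSpos t).ne'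
    have := ((hI t).add (hS t)).sub (hlog.const_mul (γ/β))
    refine this.congr_deriv ?_
    rw [eq_comm]
    field_simp [(hSpos t).ne', hβ.ne']
    ring
  have hconst : F t₂ = F t₁ := by
    have : ∀ x y : ℝ, F x = F y := by
      intro x y
      have hd : ∀ t, DifferentiableAt ℝ F t := fun t => (hF' t).differentiableAt
      have : deriv F = fun _ => 0 := funext fun t => (hF' t).deriv
      exact is_const_of_deriv_eq_zero (fun t => hd t) (fun t => by rw [this]) x y
    exact this t₂ t₁
  have hβγ : (γ/β) ≠ 0 := by positivity
  have hlogdiff : Real.log (S t₂ / S t₁) = Real.log (S t₂) - Real.log (S t₁) :=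
    Real.log_div (hSpos t₂).ne' (hSpos t₁).ne'
  have key : (γ/β) * (Real.log (S t₂) - Real.log (S t₁)) = I t₂ + S t₂ - (I t₁ + S t₁) := by
    have := hconst
    simp only [hF] at this
    linarith [this]
  rw [hr, hlogdiff]
  have hne' : I t₂ + S t₂ - I t₁ - S t₁ ≠ 0 := fun h => hne (by linarith)
  have key2 : γ * (Real.log (S t₂) - Real.log (S t₁)) = β * (I t₂ + S t₂ - (I t₁ + S t₁)) := by
    field_simp at key
    linarith
  rw [div_eq_div_iff hγ.ne' hne']
  nlinarith [key2]
end

section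
/- Let β, γ > 0, r₀ = β/γ, and let S, I be differentiable with S > 0 satisfying S' = -βSI and I' = βSI - γI. If I(t₂) = 0, then for any t₁: I(t₁) + S(t₁) - (1/r₀)·log(S(t₁)) = S(t₂) - (1/r₀)·log(S(t₂)). -/
theorem stmt10 (β γ r₀ : ℝ) (hβ : 0 < β) (hγ : 0 < γ) (hr : r₀ = β / γ)
    (S I : ℝ → ℝ) (hSpos : ∀ t, 0 < S t)
    (hS : ∀ t, HasDerivAt S (-β * S t * I t) t)
    (hI : ∀ t, HasDerivAt I (β * S t * I t - γ * I t) t)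
    (t₂ : ℝ) (hI2 : I t₂ = 0) :
    ∀ t₁ : ℝ,
      I t₁ + S t₁ - (1 / r₀) * Real.log (S t₁)
        = S t₂ - (1 / r₀) * Real.log (S t₂) := by
  intro t₁
  set f : ℝ → ℝ := fun t => I t + S t - (1 / r₀) * Real.log (S t) with hf
  have hderiv : ∀ t, HasDerivAt f 0 t := by
    intro t
    have h1 : HasDerivAt (fun t => Real.log (S t))
        ((-β * S t * I t) / S t) t := (hS t).log (hSpos t).ne'
    have h : HasDerivAt f _ t := (((hI t).add (hS t)).sub (h1.const_mul (1 / r₀)))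
    convert h using 1
    subst hr
    field_simp [(hSpos t).ne', hβ.ne', hγ.ne']
    ring
  have hconst : f t₁ = f t₂ :=
    is_const_of_deriv_eq_zero (fun t => (hderiv t).differentiableAt)
      (fun t => (hderiv t).deriv) t₁ t₂
  simpa [hf, hI2] using hconst
end
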